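/- The union of a Wheeler language L with a finite language F is Wheeler: if every monotone sequence in (Pref(L), ≺) is eventually constant modulo ≡_L and F is finite, then every monotone sequence in (Pref(L ∪ F), ≺) is eventually constant modulo ≡_{L ∪ F}. -/

import Mathlib

/-- The co-lexicographic (strict) order on strings. -/
def ListColex {α : Type*} [LinearOrder α] (x y : List α) : Prop :=
  List.Lex (· < ·) x.reverse y.reverse

/-- Weak co-lexicographic order. -/
def ColexLE {α : Type*} [LinearOrder α] (x y : List α) : Prop :=
  ListColex x y ∨ x = y

/-- A sequence of strings is monotone (weakly increasing or weakly decreasing)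
with respect to the co-lexicographic order. -/
def MonoColex {α : Type*} [LinearOrder α] (f : ℕ → List α) : Prop :=
  (∀ i, ColexLE (f i) (f (i + 1))) ∨ (∀ i, ColexLE (f (i + 1)) (f i))

/-- The set of prefixes of words of `L`. -/
def PrefL {α : Type*} (L : Set (List α)) : Set (List α) := {x | ∃ y, x ++ y ∈ L}

/-- The Myhill–Nerode right congruence `≡_L`. -/
def EqL {α : Type*} (L : Set (List α)) (x y : List α) : Prop :=
  ∀ z, x ++ z ∈ L ↔ y ++ z ∈ L

/-- The sequence characterization of Wheeler languages: every monotone sequence in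
`(Pref(L), ≺)` is eventually constant modulo `≡_L`. -/
def WheelerLike {α : Type*} [LinearOrder α] (L : Set (List α)) : Prop :=
  ∀ f : ℕ → List α, (∀ i, f i ∈ PrefL L) → MonoColex f →
    ∃ n : ℕ, ∀ h k : ℕ, n ≤ h → n ≤ k → EqL L (f h) (f k)

section Aux

variable {α : Type*} [LinearOrder α]

lemma colex_trans {x y z : List α} (h1 : ListColex x y) (h2 : ListColex y z) : ListColex x z := by
  unfold ListColex at *
  exact List.lex_trans lt_trans h1 h2

lemma colex_asymm {x y : List α} (h1 : ListColex x y) (h2 : ListColex y x) : False := by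
  unfold ListColex at *
  exact Std.Asymm.asymm _ _ h1 h2

lemma colexLE_trans {x y z : List α} (h1 : ColexLE x y) (h2 : ColexLE y z) : ColexLE x z := by
  rcases h1 with h1 | rfl
  · rcases h2 with h2 | rfl
    · exact Or.inl (colex_trans h1 h2)
    · exact Or.inl h1
  · exact h2

lemma colexLE_antisymm {x y : List α} (h1 : ColexLE x y) (h2 : ColexLE y x) : x = y := by
  rcases h1 with h1 | rfl
  · rcases h2 with h2 | rfl
    · exact absurd h2 (fun h => colex_asymm h1 h)
    · rfl
  · rfl

lemma mono_le (f : ℕ → List α) (h : ∀ i, ColexLE (f i) (f (i + 1))) :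
    ∀ i j, i ≤ j → ColexLE (f i) (f j) := by
  intro i j hij
  induction j, hij using Nat.le_induction with
  | base => exact Or.inr rfl
  | succ j _ ih => exact colexLE_trans ih (h j)

/-- Plateau lemma: in a monotone sequence, values between two equal values are equal. -/
lemma plateau (f : ℕ → List α) (hm : MonoColex f) {j i k : ℕ}
    (hji : j ≤ i) (hik : i ≤ k) (h : f j = f k) : f i = f j := by
  rcases hm with hm | hm
  · have h1 := mono_le f hm j i hji
    have h2 := mono_le f hm i k hik
    rw [← h] at h2
    exact (colexLE_antisymm h1 h2).symm
  · have step : ∀ n, ColexLE ((fun i => f (k - i)) n) ((fun i => f (k - i)) (n + 1)) := by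
      intro n
      rcases le_or_gt (n + 1) k with hn | hn
      · have : k - n = (k - (n + 1)) + 1 := by omega
        simpa [this] using hm (k - (n + 1))
      · have : k - (n + 1) = k - n := by omega
        simp [this, ColexLE]
    have key : ∀ a b, a ≤ b → b ≤ k → ColexLE (f b) (f a) := by
      intro a b hab hbk
      have := mono_le (fun i => f (k - i)) step (k - b) (k - a) (by omega)
      rwa [(by omega : k - (k - b) = b), (by omega : k - (k - a) = a)] at this
    have h1 := key j i hji (by omega)
    have h2 := key i k hik le_rfl
    rw [← h] at h2
    exact (colexLE_antisymm h2 h1).symm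

end Aux

/-- The union of a Wheeler language with a finite language is Wheeler. -/
theorem wheeler_union_finite {α : Type*} [Fintype α] [LinearOrder α]
    (L F : Set (List α)) (hL : WheelerLike L) (hF : F.Finite) :
    WheelerLike (L ∪ F) := by
  intro f hf hmono
  by_cases hc : ∃ n, ∀ i, n ≤ i → f i = f n
  · obtain ⟨n, hn⟩ := hc
    refine ⟨n, fun h k hh hk => ?_⟩
    rw [hn h hh, hn k hk]
    exact fun z => Iff.rfl
  · push_neg at hc
    -- every value is taken only boundedly often
    have hbd : ∀ s : List α, ∃ N, ∀ i, N ≤ i → f i ≠ s := by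
      intro s
      by_contra hcon
      push_neg at hcon
      -- s appears at arbitrarily large indices
      rcases hcon 0 with ⟨j, _, hj⟩
      obtain ⟨i, hji, hi⟩ := hc j
      rcases hcon i with ⟨k, hik, hk⟩
      exact hi (by rw [plateau f hmono hji hik (hj.trans hk.symm), hj])
    -- Pref F is finite
    have hPF : (PrefL F).Finite := by
      have hsub : PrefL F ⊆ ⋃ y ∈ F, {x | x ∈ y.inits} := by
        rintro x ⟨y, hy⟩
        exact Set.mem_biUnion hy (by simp [List.mem_inits])
      exact Set.Finite.subset (Set.Finite.biUnion hF (fun y _ => (y.inits).finite_toSet)) hsub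
    choose N hN using hbd
    set N₀ : ℕ := hPF.toFinset.sup N with hN₀
    have hnotF : ∀ i, N₀ ≤ i → f i ∉ PrefL F := by
      intro i hi hmem
      have : N (f i) ≤ N₀ := Finset.le_sup (hPF.mem_toFinset.mpr hmem)
      exact hN (f i) i (this.trans hi) rfl
    -- shifted sequence lands in Pref L
    set g : ℕ → List α := fun i => f (N₀ + i) with hg
    have hgP : ∀ i, g i ∈ PrefL L := by
      intro i
      rcases hf (N₀ + i) with ⟨y, hy | hy⟩
      · exact ⟨y, hy⟩
      · exact absurd ⟨y, hy⟩ (hnotF (N₀ + i) (Nat.le_add_right _ _))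
    have hgm : MonoColex g := by
      rcases hmono with hm | hm
      · exact Or.inl fun i => hm (N₀ + i)
      · exact Or.inr fun i => hm (N₀ + i)
    obtain ⟨n, hn⟩ := hL g hgP hgm
    refine ⟨N₀ + n, fun h k hh hk => ?_⟩
    have hfh : f h = g (h - N₀) := by simp [hg]; congr 1; omega
    have hfk : f k = g (k - N₀) := by simp [hg]; congr 1; omega
    have hEq : EqL L (g (h - N₀)) (g (k - N₀)) := hn _ _ (by omega) (by omega)
    intro z
    have hFh : f h ++ z ∉ F := fun hmem => hnotF h (by omega) ⟨z, hmem⟩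
    have hFk : f k ++ z ∉ F := fun hmem => hnotF k (by omega) ⟨z, hmem⟩
    rw [hfh, hfk] at *
    constructor
    · rintro (hL' | hF')
      · exact Or.inl ((hEq z).mp hL')
      · exact absurd hF' hFh
    · rintro (hL' | hF')
      · exact Or.inl ((hEq z).mpr hL')
      · exact absurd hF' hFk
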